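/- arXiv:2305.02943 — 2 statements merged into one kernel-verified Lean document; each statement's English description precedes it below -/
import Mathlib

section
/- Fix an integer g ≥ 1 and a symmetric g×g complex matrix τ whose imaginary part is positive definite. Then the Riemann addition formula holds: for all z, w ∈ ℂ^g, θ(z + w)·θ(z − w) = ∑_{a ∈ {0,1}^g} Θ_a(z)·Θ_a(w), where the sum runs over the 2^g vectors a with entries in {0,1}. -/
open Finset Complex

/-- The summand of the Riemann theta series:
`exp(πi·nᵀτn + 2πi·nᵀz)` for `n ∈ ℤ^g`. -/
noncomputable def riemannThetaTerm {g : ℕ} (τ : Matrix (Fin g) (Fin g) ℂ)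
    (z : Fin g → ℂ) (n : Fin g → ℤ) : ℂ :=
  Complex.exp ((Real.pi : ℂ) * Complex.I *
      (∑ i : Fin g, ∑ j : Fin g, (n i : ℂ) * τ i j * (n j : ℂ)) +
    2 * (Real.pi : ℂ) * Complex.I * ∑ i : Fin g, (n i : ℂ) * z i)

/-- The Riemann theta function `θ(z) = ∑_{n ∈ ℤ^g} exp(πi·nᵀτn + 2πi·nᵀz)`. -/
noncomputable def riemannTheta {g : ℕ} (τ : Matrix (Fin g) (Fin g) ℂ)
    (z : Fin g → ℂ) : ℂ :=
  ∑' n : Fin g → ℤ, riemannThetaTerm τ z n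

/-- The second-order theta function with characteristic `a ∈ {0,1}^g`:
`Θ_a(z) = ∑_{n ∈ ℤ^g} exp(2πi·(n+a/2)ᵀτ(n+a/2) + 4πi·(n+a/2)ᵀz)`. -/
noncomputable def theta2 {g : ℕ} (τ : Matrix (Fin g) (Fin g) ℂ)
    (a : Fin g → Fin 2) (z : Fin g → ℂ) : ℂ :=
  ∑' n : Fin g → ℤ,
    Complex.exp (2 * (Real.pi : ℂ) * Complex.I *
        (∑ i : Fin g, ∑ j : Fin g,
          ((n i : ℂ) + ((a i : ℕ) : ℂ) / 2) * τ i j * ((n j : ℂ) + ((a j : ℕ) : ℂ) / 2)) +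
      4 * (Real.pi : ℂ) * Complex.I *
        ∑ i : Fin g, ((n i : ℂ) + ((a i : ℕ) : ℂ) / 2) * z i)


lemma summable_exp_quad {c : ℝ} (C : ℝ) (hc : 0 < c) :
    Summable fun n : ℤ => Real.exp (-(c * (n : ℝ) ^ 2) + C * |(n : ℝ)|) := by
  have key : ∀ s : ℝ, Summable fun n : ℤ =>
      Real.exp (-(c * (n : ℝ) ^ 2) + s * (n : ℝ)) := by
    intro s
    have hτ : (0 : ℝ) < ((c / Real.pi : ℝ) * Complex.I).im := by
      simp [div_pos hc Real.pi_pos]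
    have h1 : Summable fun n : ℤ =>
        jacobiTheta₂_term n ((-(s / (2 * Real.pi)) : ℝ) * Complex.I)
          ((c / Real.pi : ℝ) * Complex.I) :=
      (summable_jacobiTheta₂_term_iff _ _).mpr hτ
    have h2 := summable_norm_iff.mpr h1
    refine h2.congr fun n => ?_
    rw [norm_jacobiTheta₂_term]
    congr 1
    have hπ : (Real.pi : ℝ) ≠ 0 := Real.pi_ne_zero
    simp only [Complex.mul_im, Complex.ofReal_re, Complex.ofReal_im, Complex.I_im,
      Complex.I_re, mul_zero, zero_mul, mul_one, add_zero, zero_add]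
    field_simp
    ring
  have h := (key C).add (key (-C))
  refine (h.of_nonneg_of_le (fun n => Real.exp_nonneg _) fun n => ?_).congr fun n => rfl
  rcases abs_choice (n : ℝ) with h' | h'
  · rw [h']
    exact le_add_of_nonneg_right (Real.exp_nonneg _)
  · rw [h', (by ring : C * -(n : ℝ) = -C * (n : ℝ))]
    exact le_add_of_nonneg_left (Real.exp_nonneg _)

lemma summable_pi_prod {f : ℤ → ℝ} (h0 : ∀ x, 0 ≤ f x) (hf : Summable f) :
    ∀ g : ℕ, Summable fun n : Fin g → ℤ => ∏ i, f (n i) := by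
  intro g
  induction g with
  | zero => exact .of_finite
  | succ g ih =>
    have h : Summable fun p : ℤ × (Fin g → ℤ) => f p.1 * ∏ i, f (p.2 i) := by
      apply Summable.mul_of_nonneg hf ih (fun x => h0 x)
      exact fun n => Finset.prod_nonneg fun i _ => h0 _
    have h2 := h.comp_injective (Fin.consEquiv fun _ => ℤ).symm.injective
    exact h2.congr fun n => by
      simp only [Function.comp_apply, Fin.prod_univ_succ, Fin.consEquiv_symm_apply, Fin.tail]

lemma posdef_quad_lower {g : ℕ} (hg : 1 ≤ g) (Y : Matrix (Fin g) (Fin g) ℝ)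
    (hY : Y.PosDef) :
    ∃ c > 0, ∀ v : Fin g → ℝ,
      c * (∑ i, (v i) ^ 2) ≤ ∑ i, ∑ j, v i * Y i j * v j := by
  haveI : Nonempty (Fin g) := ⟨⟨0, hg⟩⟩
  set F : (Fin g → ℝ) → ℝ := fun v => ∑ i, ∑ j, v i * Y i j * v j with hF
  have hFc : Continuous F := by
    apply continuous_finset_sum
    intro i _
    apply continuous_finset_sum
    intro j _
    exact ((continuous_apply i).mul continuous_const).mul (continuous_apply j)
  have hFpos : ∀ v : Fin g → ℝ, v ≠ 0 → 0 < F v := by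
    intro v hv
    have := hY.dotProduct_mulVec_pos hv
    simp only [star_trivial, dotProduct, Matrix.mulVec, RCLike.re_to_real] at this
    refine this.trans_eq ?_
    simp only [hF, Finset.mul_sum, dotProduct]
    exact Finset.sum_congr rfl fun i _ => Finset.sum_congr rfl fun j _ => by ring
  have hsm : ∀ (t : ℝ) (v : Fin g → ℝ), F (t • v) = t ^ 2 * F v := by
    intro t v
    simp only [hF, Finset.mul_sum, Pi.smul_apply, smul_eq_mul]
    exact Finset.sum_congr rfl fun i _ => Finset.sum_congr rfl fun j _ => by ring
  -- minimize on sphere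
  have hne : ((fun _ => 1 : Fin g → ℝ)) ∈ Metric.sphere (0 : Fin g → ℝ) 1 := by
    simp [pi_norm_const]
  obtain ⟨v0, hv0, hmin⟩ := (isCompact_sphere (0 : Fin g → ℝ) 1).exists_isMinOn
    ⟨_, hne⟩ hFc.continuousOn
  have hv0n : ‖v0‖ = 1 := by simpa using hv0
  have hv0ne : v0 ≠ 0 := by
    intro h; rw [h] at hv0n; simp at hv0n
  have hc0 : 0 < F v0 := hFpos v0 hv0ne
  have hgpos : (0 : ℝ) < g := by exact_mod_cast hg
  refine ⟨F v0 / g, div_pos hc0 hgpos, ?_⟩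
  intro v
  rcases eq_or_ne v 0 with rfl | hv
  · simp [hF]
  · have htpos : 0 < ‖v‖ := norm_pos_iff.mpr hv
    have hu : (‖v‖⁻¹ • v) ∈ Metric.sphere (0 : Fin g → ℝ) 1 := by
      simp [norm_smul, abs_of_pos (inv_pos.mpr htpos), inv_mul_cancel₀ htpos.ne']
    have h1 : F v0 ≤ F (‖v‖⁻¹ • v) := hmin hu
    rw [hsm] at h1
    have h2 : F v0 * ‖v‖ ^ 2 ≤ F v := by
      have := mul_le_mul_of_nonneg_right h1 (sq_nonneg ‖v‖)
      calc F v0 * ‖v‖ ^ 2 ≤ (‖v‖⁻¹ ^ 2 * F v) * ‖v‖ ^ 2 := this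
        _ = F v := by field_simp
    have h3 : (∑ i, (v i) ^ 2) ≤ g * ‖v‖ ^ 2 := by
      calc ∑ i, (v i) ^ 2 ≤ ∑ _i : Fin g, ‖v‖ ^ 2 := by
            refine Finset.sum_le_sum fun i _ => ?_
            have := norm_le_pi_norm v i
            calc (v i) ^ 2 = |v i| ^ 2 := (_root_.sq_abs _).symm
              _ ≤ ‖v‖ ^ 2 := by
                  have h4 : |v i| ≤ ‖v‖ := by simpa using this
                  exact pow_le_pow_left₀ (abs_nonneg _) h4 2
        _ = g * ‖v‖ ^ 2 := by simp [Finset.sum_const, nsmul_eq_mul]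
    calc F v0 / g * ∑ i, (v i) ^ 2 ≤ F v0 / g * (g * ‖v‖ ^ 2) := by
          exact mul_le_mul_of_nonneg_left h3 (div_nonneg hc0.le hgpos.le)
      _ = F v0 * ‖v‖ ^ 2 := by field_simp
      _ ≤ F v := h2


lemma norm_riemannThetaTerm {g : ℕ} (τ : Matrix (Fin g) (Fin g) ℂ)
    (z : Fin g → ℂ) (n : Fin g → ℤ) :
    ‖riemannThetaTerm τ z n‖ =
      Real.exp (-(Real.pi * ∑ i, ∑ j, (n i : ℝ) * (τ i j).im * (n j : ℝ))
        - 2 * Real.pi * ∑ i, (n i : ℝ) * (z i).im) := by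
  rw [riemannThetaTerm, Complex.norm_exp]
  congr 1
  have hQ : (∑ i : Fin g, ∑ j : Fin g, (n i : ℂ) * τ i j * (n j : ℂ)).im
      = ∑ i, ∑ j, (n i : ℝ) * (τ i j).im * (n j : ℝ) := by
    rw [Complex.im_sum]
    refine Finset.sum_congr rfl fun i _ => ?_
    rw [Complex.im_sum]
    refine Finset.sum_congr rfl fun j _ => ?_
    simp [Complex.mul_im, Complex.mul_re]
  have hL : (∑ i : Fin g, (n i : ℂ) * z i).im = ∑ i, (n i : ℝ) * (z i).im := by
    rw [Complex.im_sum]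
    refine Finset.sum_congr rfl fun i _ => ?_
    simp [Complex.mul_im]
  rw [Complex.add_re]
  have h1 : ((Real.pi : ℂ) * Complex.I *
      (∑ i : Fin g, ∑ j : Fin g, (n i : ℂ) * τ i j * (n j : ℂ))).re
      = -(Real.pi * ∑ i, ∑ j, (n i : ℝ) * (τ i j).im * (n j : ℝ)) := by
    rw [← hQ]
    simp [Complex.mul_re, Complex.mul_im]
  have h2 : (2 * (Real.pi : ℂ) * Complex.I * ∑ i : Fin g, (n i : ℂ) * z i).re
      = -(2 * Real.pi * ∑ i, (n i : ℝ) * (z i).im) := by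
    rw [← hL]
    simp [Complex.mul_re, Complex.mul_im]
  rw [h1, h2]
  ring

lemma summable_norm_riemannThetaTerm {g : ℕ} (hg : 1 ≤ g)
    (τ : Matrix (Fin g) (Fin g) ℂ)
    (hτ' : (Matrix.of fun i j => (τ i j).im).PosDef) (z : Fin g → ℂ) :
    Summable fun n : Fin g → ℤ => ‖riemannThetaTerm τ z n‖ := by
  obtain ⟨c, hc, hq⟩ := posdef_quad_lower hg _ hτ'
  set B := ∑ k, |(z k).im| with hBdef
  have hB0 : 0 ≤ B := Finset.sum_nonneg fun k _ => abs_nonneg _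
  have hB : ∀ i, |(z i).im| ≤ B := fun i => by
    simpa [hBdef] using Finset.single_le_sum (f := fun k => |(z k).im|)
      (fun k _ => abs_nonneg _) (Finset.mem_univ i)
  have hFsum : Summable fun m : ℤ =>
      Real.exp (-(Real.pi * c * (m : ℝ) ^ 2) + 2 * Real.pi * B * |(m : ℝ)|) :=
    summable_exp_quad _ (by positivity)
  have hmain := summable_pi_prod (fun x => Real.exp_nonneg _) hFsum g
  apply hmain.of_nonneg_of_le (fun n => norm_nonneg _)
  intro n
  rw [norm_riemannThetaTerm, ← Real.exp_sum, Real.exp_le_exp]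
  have hsum : ∑ i : Fin g, (-(Real.pi * c * ((n i : ℝ)) ^ 2) + 2 * Real.pi * B * |(n i : ℝ)|)
      = -(Real.pi * c * ∑ i, ((n i : ℝ)) ^ 2) + 2 * Real.pi * B * ∑ i, |(n i : ℝ)| := by
    rw [Finset.sum_add_distrib]
    congr 1
    · rw [Finset.mul_sum, ← Finset.sum_neg_distrib]
    · exact (Finset.mul_sum _ _ _).symm
  rw [hsum]
  have hQ : c * (∑ i, ((n i : ℝ)) ^ 2) ≤ ∑ i, ∑ j, (n i : ℝ) * (τ i j).im * (n j : ℝ) := by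
    have := hq fun i => (n i : ℝ)
    simpa using this
  have hL : -(∑ i, (n i : ℝ) * (z i).im) ≤ B * ∑ i, |(n i : ℝ)| := by
    calc -(∑ i, (n i : ℝ) * (z i).im) ≤ |∑ i, (n i : ℝ) * (z i).im| := neg_le_abs _
      _ ≤ ∑ i, |(n i : ℝ) * (z i).im| := Finset.abs_sum_le_sum_abs _ _
      _ ≤ ∑ i, |(n i : ℝ)| * B := by
          refine Finset.sum_le_sum fun i _ => ?_
          rw [abs_mul]
          exact mul_le_mul_of_nonneg_left (hB i) (abs_nonneg _)
      _ = B * ∑ i, |(n i : ℝ)| := by rw [← Finset.sum_mul]; ring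
  have h1 : -(Real.pi * ∑ i, ∑ j, (n i : ℝ) * (τ i j).im * (n j : ℝ))
      ≤ -(Real.pi * c * ∑ i, ((n i : ℝ)) ^ 2) := by
    rw [neg_le_neg_iff]
    calc Real.pi * c * ∑ i, ((n i : ℝ)) ^ 2 = Real.pi * (c * ∑ i, ((n i : ℝ)) ^ 2) := by ring
      _ ≤ Real.pi * ∑ i, ∑ j, (n i : ℝ) * (τ i j).im * (n j : ℝ) :=
          mul_le_mul_of_nonneg_left hQ Real.pi_pos.le
  have h2 : -(2 * Real.pi * ∑ i, (n i : ℝ) * (z i).im) ≤ 2 * Real.pi * B * ∑ i, |(n i : ℝ)| := by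
    calc -(2 * Real.pi * ∑ i, (n i : ℝ) * (z i).im)
        = 2 * Real.pi * -(∑ i, (n i : ℝ) * (z i).im) := by ring
      _ ≤ 2 * Real.pi * (B * ∑ i, |(n i : ℝ)|) :=
          mul_le_mul_of_nonneg_left hL (by positivity)
      _ = 2 * Real.pi * B * ∑ i, |(n i : ℝ)| := by ring
  calc -(Real.pi * ∑ i, ∑ j, (n i : ℝ) * (τ i j).im * (n j : ℝ))
        - 2 * Real.pi * ∑ i, (n i : ℝ) * (z i).im
      ≤ -(Real.pi * c * ∑ i, ((n i : ℝ)) ^ 2) + 2 * Real.pi * B * ∑ i, |(n i : ℝ)| := by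
        have := add_le_add h1 h2
        linarith
    _ = _ := rfl


def thetaAddEquiv (g : ℕ) :
    ((Fin g → Fin 2) × (Fin g → ℤ) × (Fin g → ℤ)) ≃ ((Fin g → ℤ) × (Fin g → ℤ)) where
  toFun x := (fun i => x.2.1 i + x.2.2 i + ((x.1 i : ℕ) : ℤ), fun i => x.2.1 i - x.2.2 i)
  invFun y := (fun i => ⟨((y.1 i + y.2 i) % 2).toNat, by omega⟩,
    fun i => (y.1 i + y.2 i) / 2, fun i => (y.1 i - y.2 i) / 2)
  left_inv := by
    rintro ⟨a, r, s⟩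
    dsimp only
    refine Prod.ext (funext fun i => ?_) (Prod.ext (funext fun i => ?_) (funext fun i => ?_))
    · have h2 := (a i).isLt
      exact Fin.ext (by push_cast; omega)
    · have h2 := (a i).isLt
      show (r i + s i + ((a i : ℕ) : ℤ) + (r i - s i)) / 2 = r i
      omega
    · have h2 := (a i).isLt
      show (r i + s i + ((a i : ℕ) : ℤ) - (r i - s i)) / 2 = s i
      omega
  right_inv := by
    rintro ⟨m, n⟩
    dsimp only
    refine Prod.ext (funext fun i => ?_) (funext fun i => ?_) <;> · push_cast; omega



noncomputable def theta2Term {g : ℕ} (τ : Matrix (Fin g) (Fin g) ℂ)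
    (a : Fin g → Fin 2) (z : Fin g → ℂ) (n : Fin g → ℤ) : ℂ :=
  Complex.exp (2 * (Real.pi : ℂ) * Complex.I *
          (∑ i : Fin g, ∑ j : Fin g,
            ((n i : ℂ) + ((a i : ℕ) : ℂ) / 2) * τ i j * ((n j : ℂ) + ((a j : ℕ) : ℂ) / 2)) +
        4 * (Real.pi : ℂ) * Complex.I *
          ∑ i : Fin g, ((n i : ℂ) + ((a i : ℕ) : ℂ) / 2) * z i)

lemma theta_term_key {g : ℕ} (τ : Matrix (Fin g) (Fin g) ℂ) (z w : Fin g → ℂ)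
    (a : Fin g → Fin 2) (r s : Fin g → ℤ) :
    riemannThetaTerm τ (z + w) (fun i => r i + s i + ((a i : ℕ) : ℤ)) *
      riemannThetaTerm τ (z - w) (fun i => r i - s i) =
    theta2Term τ a z r * theta2Term τ a w s := by
  simp only [riemannThetaTerm, theta2Term, ← Complex.exp_add]
  congr 1
  have hA : (∑ i : Fin g, ∑ j : Fin g,
        ((r i + s i + ((a i : ℕ) : ℤ) : ℤ) : ℂ) * τ i j * ((r j + s j + ((a j : ℕ) : ℤ) : ℤ) : ℂ)) +
      (∑ i : Fin g, ∑ j : Fin g, ((r i - s i : ℤ) : ℂ) * τ i j * ((r j - s j : ℤ) : ℂ)) =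
      2 * (∑ i : Fin g, ∑ j : Fin g,
        ((r i : ℂ) + ((a i : ℕ) : ℂ) / 2) * τ i j * ((r j : ℂ) + ((a j : ℕ) : ℂ) / 2)) +
      2 * (∑ i : Fin g, ∑ j : Fin g,
        ((s i : ℂ) + ((a i : ℕ) : ℂ) / 2) * τ i j * ((s j : ℂ) + ((a j : ℕ) : ℂ) / 2)) := by
    simp only [Finset.mul_sum, ← Finset.sum_add_distrib]
    refine Finset.sum_congr rfl fun i _ => ?_
    refine Finset.sum_congr rfl fun j _ => ?_
    push_cast
    ring
  have hB : (∑ i : Fin g, ((r i + s i + ((a i : ℕ) : ℤ) : ℤ) : ℂ) * (z + w) i) +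
      (∑ i : Fin g, ((r i - s i : ℤ) : ℂ) * (z - w) i) =
      2 * (∑ i : Fin g, ((r i : ℂ) + ((a i : ℕ) : ℂ) / 2) * z i) +
      2 * (∑ i : Fin g, ((s i : ℂ) + ((a i : ℕ) : ℂ) / 2) * w i) := by
    simp only [Finset.mul_sum, ← Finset.sum_add_distrib, Pi.add_apply, Pi.sub_apply]
    refine Finset.sum_congr rfl fun i _ => ?_
    push_cast
    ring
  push_cast at hA hB ⊢
  linear_combination (Real.pi : ℂ) * Complex.I * hA + 2 * (Real.pi : ℂ) * Complex.I * hB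

set_option maxHeartbeats 2000000 in
/-- Riemann's addition formula:
`θ(z + w)·θ(z − w) = ∑_{a ∈ {0,1}^g} Θ_a(z)·Θ_a(w)`. -/
theorem riemann_addition_formula (g : ℕ) (hg : 1 ≤ g)
    (τ : Matrix (Fin g) (Fin g) ℂ) (hτ : τ.IsSymm)
    (hτ' : (Matrix.of fun i j => (τ i j).im).PosDef) :
    ∀ z w : Fin g → ℂ,
      riemannTheta τ (z + w) * riemannTheta τ (z - w) =
        ∑ a : Fin g → Fin 2, theta2 τ a z * theta2 τ a w := by
  intro z w
  have hfn := summable_norm_riemannThetaTerm hg τ hτ' (z + w)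
  have hgn := summable_norm_riemannThetaTerm hg τ hτ' (z - w)
  have h1 : riemannTheta τ (z + w) * riemannTheta τ (z - w)
      = ∑' p : (Fin g → ℤ) × (Fin g → ℤ),
          riemannThetaTerm τ (z + w) p.1 * riemannThetaTerm τ (z - w) p.2 :=
    tsum_mul_tsum_of_summable_norm hfn hgn
  rw [h1]
  have hS : Summable fun p : (Fin g → ℤ) × (Fin g → ℤ) =>
      riemannThetaTerm τ (z + w) p.1 * riemannThetaTerm τ (z - w) p.2 := by
    apply Summable.of_norm
    exact Summable.mul_norm hfn hgn
  set E := thetaAddEquiv g with hE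
  have hterm : ∀ q : (Fin g → Fin 2) × (Fin g → ℤ) × (Fin g → ℤ),
      riemannThetaTerm τ (z + w) (E q).1 * riemannThetaTerm τ (z - w) (E q).2
        = theta2Term τ q.1 z q.2.1 * theta2Term τ q.1 w q.2.2 := by
    rintro ⟨a, r, s⟩
    exact theta_term_key τ z w a r s
  have h2 : (∑' p : (Fin g → ℤ) × (Fin g → ℤ),
        riemannThetaTerm τ (z + w) p.1 * riemannThetaTerm τ (z - w) p.2)
      = ∑' q : (Fin g → Fin 2) × (Fin g → ℤ) × (Fin g → ℤ),
        theta2Term τ q.1 z q.2.1 * theta2Term τ q.1 w q.2.2 := by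
    rw [← E.tsum_eq]
    exact tsum_congr hterm
  have hS2 : Summable fun q : (Fin g → Fin 2) × (Fin g → ℤ) × (Fin g → ℤ) =>
      theta2Term τ q.1 z q.2.1 * theta2Term τ q.1 w q.2.2 :=
    (hS.comp_injective E.injective).congr hterm
  rw [h2, hS2.tsum_prod' (fun a => hS2.prod_factor a), tsum_fintype]
  refine Finset.sum_congr rfl fun a _ => ?_
  have h4 : Summable fun rs : (Fin g → ℤ) × (Fin g → ℤ) =>
      theta2Term τ a z rs.1 * theta2Term τ a w rs.2 := hS2.prod_factor a
  have hinj1 : Function.Injective (fun t : Fin g → ℤ => (t, (0 : Fin g → ℤ))) :=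
    fun x y hxy => by simpa using congrArg Prod.fst hxy
  have hinj2 : Function.Injective (fun t : Fin g → ℤ => ((0 : Fin g → ℤ), t)) :=
    fun x y hxy => by simpa using congrArg Prod.snd hxy
  have hz1 : Summable fun t : Fin g → ℤ => theta2Term τ a z t := by
    have h5 := h4.comp_injective hinj1
    have h6 := h5.div_const (theta2Term τ a w 0)
    refine h6.congr fun t => ?_
    have hK : theta2Term τ a w 0 ≠ 0 := Complex.exp_ne_zero _
    rw [Function.comp_apply]
    field_simp
  have hw1 : Summable fun t : Fin g → ℤ => theta2Term τ a w t := by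
    have h5 := h4.comp_injective hinj2
    have h6 := h5.div_const (theta2Term τ a z 0)
    refine h6.congr fun t => ?_
    have hK : theta2Term τ a z 0 ≠ 0 := Complex.exp_ne_zero _
    rw [Function.comp_apply]
    field_simp
  have hth : theta2 τ a z = ∑' t, theta2Term τ a z t := rfl
  have hth' : theta2 τ a w = ∑' t, theta2Term τ a w t := rfl
  rw [hth, hth', ← tsum_mul_tsum_of_summable_norm
    (summable_norm_iff.mpr hz1) (summable_norm_iff.mpr hw1)]
end

section
/- Fix an integer g ≥ 1 and a symmetric g×g complex matrix τ whose imaginary part is positive definite. Then the 2^g second-order theta functions Θ_a : ℂ^g → ℂ, for a ∈ {0,1}^g, are linearly independent over ℂ: if (c_a) are complex numbers with ∑_{a ∈ {0,1}^g} c_a Θ_a(z) = 0 for all z ∈ ℂ^g, then c_a = 0 for every a. -/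
open Finset Complex

section ThetaLinIndepAux

open MeasureTheory

private lemma aux_summable_int (r t : ℝ) (hr : 0 < r) :
    Summable fun n : ℤ => Real.exp (-r * ((n : ℝ) + t) ^ 2) := by
  have hlt : Real.exp (-(r / 2)) < 1 := Real.exp_lt_one_iff.mpr (by linarith)
  have hb : Summable fun n : ℤ => Real.exp (r * t ^ 2) * Real.exp (-(r / 2)) ^ n.natAbs := by
    apply Summable.mul_left
    apply Summable.of_nat_of_neg
    · simpa using summable_geometric_of_lt_one (Real.exp_nonneg _) hlt
    · simpa using summable_geometric_of_lt_one (Real.exp_nonneg _) hlt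
  refine Summable.of_nonneg_of_le (fun n => (Real.exp_pos _).le) (fun n => ?_) hb
  rw [← Real.exp_nat_mul, ← Real.exp_add]
  apply Real.exp_le_exp.2
  have h0 : ((n.natAbs : ℝ)) = |(n : ℝ)| := by simp [Nat.cast_natAbs]
  have h1 : (n.natAbs : ℝ) ≤ ((n.natAbs : ℝ)) ^ 2 := by
    exact_mod_cast Nat.le_self_pow two_ne_zero _
  have h2 : ((n.natAbs : ℝ)) ^ 2 = ((n : ℝ)) ^ 2 := by rw [h0, _root_.sq_abs]
  nlinarith [sq_nonneg ((n : ℝ) + 2 * t), hr.le, mul_nonneg hr.le (sq_nonneg ((n : ℝ) + 2 * t))]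

private lemma aux_summable_pi (r : ℝ) (hr : 0 < r) : ∀ (k : ℕ) (w : Fin k → ℝ),
    Summable fun n : Fin k → ℤ => ∏ i, Real.exp (-r * ((n i : ℝ) + w i) ^ 2) := by
  intro k
  induction k with
  | zero => intro w; simp; exact .of_finite
  | succ k ih =>
    intro w
    rw [← (Fin.consEquiv fun _ : Fin (k + 1) => ℤ).summable_iff]
    have he : ((fun n : Fin (k+1) → ℤ => ∏ i, Real.exp (-r * ((n i : ℝ) + w i) ^ 2)) ∘
        (Fin.consEquiv fun _ : Fin (k + 1) => ℤ)) =
        fun p : ℤ × (Fin k → ℤ) => Real.exp (-r * ((p.1 : ℝ) + w 0) ^ 2) *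
          ∏ i : Fin k, Real.exp (-r * ((p.2 i : ℝ) + w i.succ) ^ 2) := by
      funext p
      simp only [Function.comp_apply, Fin.consEquiv_apply, Fin.prod_univ_succ, Fin.cons_zero,
        Fin.cons_succ]
    rw [he]
    exact Summable.mul_of_nonneg (f := fun m : ℤ => Real.exp (-r * ((m : ℝ) + w 0) ^ 2))
      (g := fun n : Fin k → ℤ => ∏ i : Fin k, Real.exp (-r * ((n i : ℝ) + w i.succ) ^ 2))
      (aux_summable_int r (w 0) hr) (ih (w ∘ Fin.succ))
      (fun _ => (Real.exp_pos _).le)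
      (fun _ => Finset.prod_nonneg fun _ _ => (Real.exp_pos _).le)

private lemma aux_posdef_bound {g : ℕ} (hg : 1 ≤ g) (Y : Matrix (Fin g) (Fin g) ℝ) (hY : Y.PosDef) :
    ∃ ε : ℝ, 0 < ε ∧ ∀ v : Fin g → ℝ,
      ε * (∑ i, v i ^ 2) ≤ ∑ i, ∑ j, v i * Y i j * v j := by
  classical
  set E := EuclideanSpace ℝ (Fin g) with hE
  let Q : E → ℝ := fun v => ∑ i, ∑ j, v i * Y i j * v j
  have hQpos : ∀ v : E, v ≠ 0 → 0 < Q v := by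
    intro v hv
    have h := hY.dotProduct_mulVec_pos (x := WithLp.ofLp v) (by simpa using hv)
    have heq : dotProduct (star (WithLp.ofLp v)) (Y.mulVec (WithLp.ofLp v)) = Q v := by
      simp only [dotProduct, Matrix.mulVec, Pi.star_apply, star_trivial, Q]
      exact Finset.sum_congr rfl fun i _ => by
        rw [Finset.mul_sum]
        exact Finset.sum_congr rfl fun j _ => by ring
    rwa [heq] at h
  have hQcont : Continuous Q := by
    apply continuous_finset_sum
    intro i _
    apply continuous_finset_sum
    intro j _
    exact (((continuous_apply i).comp (PiLp.continuous_ofLp (p := 2) (β := fun _ : Fin g => ℝ))).mul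
      continuous_const).mul ((continuous_apply j).comp (PiLp.continuous_ofLp (p := 2) (β := fun _ : Fin g => ℝ)))
  have hne : (Metric.sphere (0 : E) 1).Nonempty := by
    refine ⟨EuclideanSpace.single ⟨0, hg⟩ (1 : ℝ), ?_⟩
    rw [mem_sphere_zero_iff_norm, EuclideanSpace.norm_single]
    norm_num
  obtain ⟨v₀, hv₀mem, hmin⟩ :=
    (isCompact_sphere (0 : E) 1).exists_isMinOn hne hQcont.continuousOn
  have hv₀ : v₀ ≠ 0 := by
    intro h
    rw [mem_sphere_zero_iff_norm] at hv₀mem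
    simp [h] at hv₀mem
  refine ⟨Q v₀, hQpos v₀ hv₀, fun v => ?_⟩
  have hscale : ∀ (c : ℝ) (u : E), Q (c • u) = c ^ 2 * Q u := by
    intro c u
    simp only [Q, Finset.mul_sum]
    refine Finset.sum_congr rfl fun i _ => Finset.sum_congr rfl fun j _ => ?_
    show c * u i * Y i j * (c * u j) = _
    ring
  set ve : E := (WithLp.equiv 2 (Fin g → ℝ)).symm v with hve
  have hQv' : Q ve = ∑ i, ∑ j, v i * Y i j * v j := rfl
  have hsum' : ∑ i, ve i ^ 2 = ∑ i, v i ^ 2 := rfl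
  by_cases hv : ve = 0
  · have hz : ∀ i, v i = 0 := fun i => congrFun (congrArg (WithLp.equiv 2 (Fin g → ℝ)) hv) i
    simp [hz]
  · have hnv : (0 : ℝ) < ‖ve‖ := norm_pos_iff.mpr hv
    set u : E := ‖ve‖⁻¹ • ve with hu
    have humem : u ∈ Metric.sphere (0 : E) 1 := by
      rw [mem_sphere_zero_iff_norm, hu, norm_smul, norm_inv, norm_norm]
      field_simp
    have hle : Q v₀ ≤ Q u := hmin humem
    have hvu : ve = ‖ve‖ • u := by
      rw [hu, smul_smul, mul_inv_cancel₀ hnv.ne', one_smul]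
    have hQv : Q ve = ‖ve‖ ^ 2 * Q u := by
      conv_lhs => rw [hvu]
      exact hscale _ _
    have hsum : ∑ i, v i ^ 2 = ‖ve‖ ^ 2 := by
      rw [← hsum', EuclideanSpace.norm_eq, Real.sq_sqrt (by positivity)]
      exact Finset.sum_congr rfl fun i _ => by rw [Real.norm_eq_abs, _root_.sq_abs]
    rw [← hQv', hQv, hsum]
    nlinarith [hle, sq_nonneg ‖ve‖]

private noncomputable def auxF (m : ℤ) : ℝ → ℂ :=
  Set.indicator (Set.Icc (0:ℝ) 1)
    (fun s : ℝ => Complex.exp ((m : ℂ) * (2 * (Real.pi : ℂ) * Complex.I) * (s : ℂ)))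

private lemma auxF_integral (m : ℤ) : ∫ t : ℝ, auxF m t = if m = 0 then 1 else 0 := by
  rw [auxF, integral_indicator measurableSet_Icc, integral_Icc_eq_integral_Ioc,
    ← intervalIntegral.integral_of_le zero_le_one]
  by_cases hm : m = 0
  · simp [hm]
  · rw [integral_exp_mul_complex
      (mul_ne_zero (Int.cast_ne_zero.mpr hm)
        (by simp [Real.pi_ne_zero, Complex.I_ne_zero, Complex.ext_iff]))]
    rw [if_neg hm]
    simp [Complex.exp_int_mul_two_pi_mul_I]

private lemma auxF_norm (m : ℤ) (t : ℝ) :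
    ‖auxF m t‖ = Set.indicator (Set.Icc (0:ℝ) 1) (fun _ => (1:ℝ)) t := by
  rw [auxF, norm_indicator_eq_indicator_norm]
  by_cases ht : t ∈ Set.Icc (0:ℝ) 1
  · rw [Set.indicator_of_mem ht, Set.indicator_of_mem ht]
    rw [show ((m:ℂ) * (2 * (Real.pi:ℂ) * I) * (t:ℂ)) = ((2 * Real.pi * m * t : ℝ) : ℂ) * I by
      push_cast; ring]
    rw [Complex.norm_exp_ofReal_mul_I]
  · rw [Set.indicator_of_notMem ht, Set.indicator_of_notMem ht]

private lemma auxF_integrable (m : ℤ) : Integrable (auxF m) := by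
  exact ((Complex.continuous_exp.comp
    (continuous_const.mul Complex.continuous_ofReal)).integrableOn_Icc).integrable_indicator
    measurableSet_Icc

private lemma auxF_norm_integral (m : ℤ) : ∫ t : ℝ, ‖auxF m t‖ = 1 := by
  have : (fun t : ℝ => ‖auxF m t‖) =
      Set.indicator (Set.Icc (0:ℝ) 1) (fun _ => (1:ℝ)) := funext (auxF_norm m)
  rw [this, integral_indicator_const (1:ℝ) measurableSet_Icc]
  simp [Real.volume_Icc]

private noncomputable def auxK {g : ℕ} (τ : Matrix (Fin g) (Fin g) ℂ)
    (p : (Fin g → Fin 2) × (Fin g → ℤ)) : ℂ :=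
  2 * (Real.pi : ℂ) * Complex.I *
    ∑ i, ∑ j, ((p.2 i : ℂ) + ((p.1 i : ℕ) : ℂ) / 2) * τ i j * ((p.2 j : ℂ) + ((p.1 j : ℕ) : ℂ) / 2)

private lemma auxK_re {g : ℕ} (τ : Matrix (Fin g) (Fin g) ℂ)
    (p : (Fin g → Fin 2) × (Fin g → ℤ)) :
    (auxK τ p).re = -(2 * Real.pi) *
      ∑ i, ∑ j, ((p.2 i : ℝ) + (p.1 i : ℕ) / 2) * (τ i j).im * ((p.2 j : ℝ) + (p.1 j : ℕ) / 2) := by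
  have hcast : ∀ i, ((p.2 i : ℂ) + ((p.1 i : ℕ) : ℂ) / 2) =
      ((((p.2 i : ℝ) + (p.1 i : ℕ) / 2) : ℝ) : ℂ) := by
    intro i; push_cast; ring
  have hK : auxK τ p = ((2 * Real.pi : ℝ) : ℂ) *
      (Complex.I * ∑ i, ∑ j, ((((p.2 i : ℝ) + (p.1 i : ℕ) / 2) : ℝ) : ℂ) * τ i j *
        ((((p.2 j : ℝ) + (p.1 j : ℕ) / 2) : ℝ) : ℂ)) := by
    rw [auxK]
    simp_rw [← hcast]
    push_cast
    ring
  rw [hK, Complex.re_ofReal_mul, Complex.I_mul_re]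
  have him : (∑ i, ∑ j, ((((p.2 i : ℝ) + (p.1 i : ℕ) / 2) : ℝ) : ℂ) * τ i j *
      ((((p.2 j : ℝ) + (p.1 j : ℕ) / 2) : ℝ) : ℂ)).im =
      ∑ i, ∑ j, ((p.2 i : ℝ) + (p.1 i : ℕ) / 2) * (τ i j).im * ((p.2 j : ℝ) + (p.1 j : ℕ) / 2) := by
    rw [Complex.im_sum]
    refine Finset.sum_congr rfl fun i _ => ?_
    rw [Complex.im_sum]
    refine Finset.sum_congr rfl fun j _ => ?_
    simp [Complex.mul_im, Complex.mul_re]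
  rw [him]
  ring


private def auxd {g : ℕ} (b : Fin g → Fin 2) (p : (Fin g → Fin 2) × (Fin g → ℤ))
    (i : Fin g) : ℤ :=
  2 * p.2 i + ((p.1 i : ℕ) : ℤ) - ((b i : ℕ) : ℤ)

private noncomputable def auxG {g : ℕ} (τ : Matrix (Fin g) (Fin g) ℂ)
    (c : (Fin g → Fin 2) → ℂ) (b : Fin g → Fin 2) (p : (Fin g → Fin 2) × (Fin g → ℤ))
    (x : Fin g → ℝ) : ℂ :=
  (c p.1 * Complex.exp (auxK τ p)) * ∏ i, auxF (auxd b p i) (x i)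

private lemma auxG_integrable {g : ℕ} (τ : Matrix (Fin g) (Fin g) ℂ)
    (c : (Fin g → Fin 2) → ℂ) (b : Fin g → Fin 2) (p : (Fin g → Fin 2) × (Fin g → ℤ)) :
    Integrable (auxG τ c b p) := by
  exact (Integrable.fintype_prod (f := fun i t => auxF (auxd b p i) t)
    (fun i => auxF_integrable _)).const_mul _

private lemma auxG_integral {g : ℕ} (τ : Matrix (Fin g) (Fin g) ℂ)
    (c : (Fin g → Fin 2) → ℂ) (b : Fin g → Fin 2) (p : (Fin g → Fin 2) × (Fin g → ℤ)) :
    ∫ x : Fin g → ℝ, auxG τ c b p x =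
      (c p.1 * Complex.exp (auxK τ p)) * ∏ i, (if auxd b p i = 0 then (1:ℂ) else 0) := by
  simp only [auxG]
  rw [MeasureTheory.integral_const_mul,
    MeasureTheory.integral_fintype_prod_volume_eq_prod (ι := Fin g) (f := fun i t => auxF (auxd b p i) t)]
  congr 1
  exact Finset.prod_congr rfl fun i _ => auxF_integral (auxd b p i)

private lemma auxG_norm_integral {g : ℕ} (τ : Matrix (Fin g) (Fin g) ℂ)
    (c : (Fin g → Fin 2) → ℂ) (b : Fin g → Fin 2) (p : (Fin g → Fin 2) × (Fin g → ℤ)) :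
    ∫ x : Fin g → ℝ, ‖auxG τ c b p x‖ = ‖c p.1‖ * Real.exp ((auxK τ p).re) := by
  have h1 : (fun x : Fin g → ℝ => ‖auxG τ c b p x‖) = fun x =>
      (‖c p.1‖ * Real.exp ((auxK τ p).re)) * ∏ i, ‖auxF (auxd b p i) (x i)‖ := by
    funext x
    rw [auxG, norm_mul, norm_prod, norm_mul,
      Complex.norm_exp]
  rw [h1, MeasureTheory.integral_const_mul,
    MeasureTheory.integral_fintype_prod_volume_eq_prod (ι := Fin g)
      (f := fun i t => ‖auxF (auxd b p i) t‖)]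
  have h2 : ∀ i : Fin g, ∫ t : ℝ, ‖auxF (auxd b p i) t‖ = 1 := fun i => auxF_norm_integral _
  rw [Finset.prod_congr rfl fun i _ => h2 i]
  simp

private noncomputable def auxE {g : ℕ} (τ : Matrix (Fin g) (Fin g) ℂ)
    (p : (Fin g → Fin 2) × (Fin g → ℤ)) (z : Fin g → ℂ) : ℂ :=
  auxK τ p + 4 * (Real.pi : ℂ) * Complex.I * ∑ i, ((p.2 i : ℂ) + ((p.1 i : ℕ) : ℂ) / 2) * z i

private lemma auxE_re {g : ℕ} (τ : Matrix (Fin g) (Fin g) ℂ)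
    (p : (Fin g → Fin 2) × (Fin g → ℤ)) (x : Fin g → ℝ) :
    (auxE τ p (fun i => (x i : ℂ))).re = (auxK τ p).re := by
  have h5 : (4 * (Real.pi : ℂ) * Complex.I *
      ∑ i, ((p.2 i : ℂ) + ((p.1 i : ℕ) : ℂ) / 2) * ((x i : ℝ) : ℂ))
      = ((4 * Real.pi * ∑ i, ((p.2 i : ℝ) + (p.1 i : ℕ) / 2) * x i : ℝ) : ℂ) * Complex.I := by
    rw [show ((4 * Real.pi * ∑ i, ((p.2 i : ℝ) + (p.1 i : ℕ) / 2) * x i : ℝ) : ℂ) =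
        4 * (Real.pi : ℂ) * ∑ i, ((p.2 i : ℂ) + ((p.1 i : ℕ) : ℂ) / 2) * ((x i : ℝ) : ℂ) by
      push_cast; ring]
    ring
  rw [auxE, Complex.add_re, h5]
  simp [Complex.mul_re]

private lemma theta2_eq_auxE {g : ℕ} (τ : Matrix (Fin g) (Fin g) ℂ) (a : Fin g → Fin 2)
    (z : Fin g → ℂ) :
    theta2 τ a z = ∑' n : Fin g → ℤ, Complex.exp (auxE τ (a, n) z) := by
  rw [theta2]
  refine tsum_congr fun n => ?_
  rw [auxE, auxK]

end ThetaLinIndepAux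

/-- the `2^g` second-order theta functions are linearly independent
over `ℂ`: any vanishing linear combination has all coefficients zero. -/
theorem theta2_linearIndependent (g : ℕ) (hg : 1 ≤ g)
    (τ : Matrix (Fin g) (Fin g) ℂ) (hτ : τ.IsSymm)
    (hτ' : (Matrix.of fun i j => (τ i j).im).PosDef) :
    ∀ c : (Fin g → Fin 2) → ℂ,
      (∀ z : Fin g → ℂ, ∑ a : Fin g → Fin 2, c a * theta2 τ a z = 0) →
        ∀ a : Fin g → Fin 2, c a = 0 := by
  classical
  intro c hc b
  obtain ⟨ε, hε, hquad⟩ := aux_posdef_bound hg _ hτ'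
  have master : Summable fun p : (Fin g → Fin 2) × (Fin g → ℤ) =>
      ‖c p.1‖ * Real.exp ((auxK τ p).re) := by
    refine (summable_prod_of_nonneg ?_).mpr ⟨?_, ?_⟩
    · intro p
      positivity
    · intro a
      show Summable fun n : Fin g → ℤ => ‖c a‖ * Real.exp ((auxK τ (a, n)).re)
      refine Summable.mul_left _ ?_
      refine Summable.of_nonneg_of_le (fun n => (Real.exp_pos _).le) (fun n => ?_)
        (aux_summable_pi (2 * Real.pi * ε) (by positivity) g (fun i => (a i : ℕ) / 2))
      rw [auxK_re]
      have hq := hquad (fun i => ((n i : ℝ) + (a i : ℕ) / 2))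
      simp only [Matrix.of_apply] at hq
      have hle : -(2 * Real.pi) *
          (∑ i, ∑ j, ((n i : ℝ) + (a i : ℕ) / 2) * (τ i j).im * ((n j : ℝ) + (a j : ℕ) / 2)) ≤
          ∑ i, -(2 * Real.pi * ε) * (((n i : ℝ) + (a i : ℕ) / 2)) ^ 2 := by
        rw [show (∑ i, -(2 * Real.pi * ε) * (((n i : ℝ) + (a i : ℕ) / 2)) ^ 2) =
            -(2 * Real.pi * ε) * ∑ i, (((n i : ℝ) + (a i : ℕ) / 2)) ^ 2 from
          (Finset.mul_sum _ _ _).symm]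
        nlinarith [Real.pi_pos]
      calc Real.exp (-(2 * Real.pi) *
            ∑ i, ∑ j, ((n i : ℝ) + (a i : ℕ) / 2) * (τ i j).im * ((n j : ℝ) + (a j : ℕ) / 2)) ≤
          Real.exp (∑ i, -(2 * Real.pi * ε) * (((n i : ℝ) + (a i : ℕ) / 2)) ^ 2) :=
            Real.exp_le_exp.2 hle
        _ = ∏ i, Real.exp (-(2 * Real.pi * ε) * ((n i : ℝ) + (a i : ℕ) / 2) ^ 2) :=
            Real.exp_sum _ _
    · exact .of_finite
  have hGnormsum : Summable fun p : (Fin g → Fin 2) × (Fin g → ℤ) =>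
      ∫ x : Fin g → ℝ, ‖auxG τ c b p x‖ :=
    master.congr fun p => (auxG_norm_integral τ c b p).symm
  have hzero : ∀ x : Fin g → ℝ, ∑' p : (Fin g → Fin 2) × (Fin g → ℤ), auxG τ c b p x = 0 := by
    intro x
    by_cases hx : ∀ i, x i ∈ Set.Icc (0:ℝ) 1
    · have hGx : ∀ p : (Fin g → Fin 2) × (Fin g → ℤ), auxG τ c b p x =
          (c p.1 * Complex.exp (auxE τ p (fun i => (x i : ℂ)))) *
            Complex.exp (-(2 * (Real.pi : ℂ) * Complex.I *
              ∑ i, ((b i : ℕ) : ℂ) * ((x i : ℝ) : ℂ))) := by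
        intro p
        have h1 : ∏ i, auxF (auxd b p i) (x i) =
            Complex.exp (∑ i, (auxd b p i : ℂ) * (2 * (Real.pi : ℂ) * Complex.I) *
              ((x i : ℝ) : ℂ)) := by
          rw [Complex.exp_sum]
          exact Finset.prod_congr rfl fun i _ => Set.indicator_of_mem (hx i) _
        have h2 : auxK τ p + ∑ i, (auxd b p i : ℂ) * (2 * (Real.pi : ℂ) * Complex.I) *
              ((x i : ℝ) : ℂ)
            = auxE τ p (fun i => (x i : ℂ)) +
              -(2 * (Real.pi : ℂ) * Complex.I * ∑ i, ((b i : ℕ) : ℂ) * ((x i : ℝ) : ℂ)) := by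
          have h3 : ∑ i, (auxd b p i : ℂ) * (2 * (Real.pi : ℂ) * Complex.I) * ((x i : ℝ) : ℂ) =
              4 * (Real.pi : ℂ) * Complex.I *
                ∑ i, ((p.2 i : ℂ) + ((p.1 i : ℕ) : ℂ) / 2) * ((x i : ℝ) : ℂ) -
              2 * (Real.pi : ℂ) * Complex.I * ∑ i, ((b i : ℕ) : ℂ) * ((x i : ℝ) : ℂ) := by
            rw [Finset.mul_sum, Finset.mul_sum, ← Finset.sum_sub_distrib]
            refine Finset.sum_congr rfl fun i _ => ?_
            have h4 : ((auxd b p i : ℤ) : ℂ) =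
                2 * (p.2 i : ℂ) + ((p.1 i : ℕ) : ℂ) - ((b i : ℕ) : ℂ) := by
              rw [auxd]; push_cast; ring
            rw [h4]; ring
          rw [h3, auxE]; ring
        rw [auxG, h1, mul_assoc, ← Complex.exp_add, h2, Complex.exp_add, ← mul_assoc]
      have hsum : Summable fun p : (Fin g → Fin 2) × (Fin g → ℤ) =>
          c p.1 * Complex.exp (auxE τ p (fun i => (x i : ℂ))) := by
        refine Summable.of_norm (master.congr fun p => ?_)
        rw [norm_mul, Complex.norm_exp, auxE_re]
      calc ∑' p : (Fin g → Fin 2) × (Fin g → ℤ), auxG τ c b p x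
          = ∑' p : (Fin g → Fin 2) × (Fin g → ℤ),
            (c p.1 * Complex.exp (auxE τ p (fun i => (x i : ℂ)))) *
              Complex.exp (-(2 * (Real.pi : ℂ) * Complex.I *
                ∑ i, ((b i : ℕ) : ℂ) * ((x i : ℝ) : ℂ))) := tsum_congr hGx
        _ = (∑' p : (Fin g → Fin 2) × (Fin g → ℤ),
              c p.1 * Complex.exp (auxE τ p (fun i => (x i : ℂ)))) *
              Complex.exp (-(2 * (Real.pi : ℂ) * Complex.I *
                ∑ i, ((b i : ℕ) : ℂ) * ((x i : ℝ) : ℂ))) := tsum_mul_right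
        _ = 0 := by
            have hp : (∑' p : (Fin g → Fin 2) × (Fin g → ℤ),
                c p.1 * Complex.exp (auxE τ p (fun i => (x i : ℂ)))) =
                ∑ a : Fin g → Fin 2, c a * theta2 τ a (fun i => (x i : ℂ)) := by
              rw [Summable.tsum_prod' hsum (fun a => hsum.prod_factor a), tsum_fintype]
              refine Finset.sum_congr rfl fun a _ => ?_
              rw [theta2_eq_auxE]
              calc ∑' n : Fin g → ℤ, c (a, n).1 * Complex.exp (auxE τ (a, n) (fun i => (x i : ℂ)))
                  = ∑' n : Fin g → ℤ, c a * Complex.exp (auxE τ (a, n) (fun i => (x i : ℂ))) :=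
                    tsum_congr fun n => rfl
                _ = c a * ∑' n : Fin g → ℤ, Complex.exp (auxE τ (a, n) (fun i => (x i : ℂ))) :=
                    tsum_mul_left
            rw [hp, hc (fun i => ((x i : ℝ) : ℂ)), zero_mul]
    · obtain ⟨i, hi⟩ := not_forall.mp hx
      have hall : ∀ p, auxG τ c b p x = 0 := fun p => by
        rw [auxG, Finset.prod_eq_zero (Finset.mem_univ i) (Set.indicator_of_notMem hi _),
          mul_zero]
      rw [tsum_congr hall]
      exact tsum_zero
  have key := MeasureTheory.integral_tsum_of_summable_integral_norm
    (fun p => auxG_integrable τ c b p) hGnormsum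
  simp only [hzero, MeasureTheory.integral_zero] at key
  have hvanish : ∀ p : (Fin g → Fin 2) × (Fin g → ℤ), p ≠ (b, fun _ => 0) →
      ∫ x : Fin g → ℝ, auxG τ c b p x = 0 := by
    intro p hp
    rw [auxG_integral]
    have hex : ∃ i, auxd b p i ≠ 0 := by
      by_contra h
      push_neg at h
      apply hp
      have ha : p.1 = b := funext fun i => by
        have h2 := h i
        rw [auxd] at h2
        have hlt1 : (p.1 i : ℕ) < 2 := (p.1 i).isLt
        have hlt2 : (b i : ℕ) < 2 := (b i).isLt
        exact Fin.ext (by omega)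
      have hn : p.2 = fun _ => 0 := funext fun i => by
        have h2 := h i
        rw [auxd] at h2
        omega
      exact Prod.ext ha hn
    obtain ⟨i, hi⟩ := hex
    rw [Finset.prod_eq_zero (Finset.mem_univ i)
      (if_neg hi : (if auxd b p i = 0 then (1:ℂ) else 0) = 0), mul_zero]
  rw [tsum_eq_single ((b, fun _ => 0) : (Fin g → Fin 2) × (Fin g → ℤ)) hvanish] at key
  rw [auxG_integral] at key
  have hd0 : ∀ i : Fin g, auxd b (b, fun _ => 0) i = 0 := fun i => by rw [auxd]; ring
  rw [Finset.prod_congr rfl fun i _ => if_pos (hd0 i), Finset.prod_const_one, mul_one] at key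
  rcases mul_eq_zero.mp key with h | h
  · exact h
  · exact absurd h (Complex.exp_ne_zero _)
end
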